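/- Let 0 < δ < 1. If k and k' are natural numbers with |k − k'| > 2, μ_k > 2/δ, and μ_{k'} > 2/δ, then the resonance sets are disjoint: σ_k^δ ∩ σ_{k'}^δ = ∅. -/
import Mathlib


/-- `μ_n = √(n(n+1))`, the square root of the `n`-th eigenvalue of `−Δ` on `S²`. -/
noncomputable def mu (n : ℕ) : ℝ := Real.sqrt (n * (n + 1))

/-- The resonance set `σ_k^δ`: triples `(k₁,k₂,k₃)` with
`|μ_k − √(max(μ_{k₁}² − μ_{k₂}² + μ_{k₃}², 0))| ≤ 1` or `μ_k ≤ 1/δ`. -/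
def resSet (δ : ℝ) (k : ℕ) : Set (ℕ × ℕ × ℕ) :=
  {t | |mu k - Real.sqrt (max (mu t.1 ^ 2 - mu t.2.1 ^ 2 + mu t.2.2 ^ 2) 0)| ≤ 1 ∨
    mu k ≤ 1 / δ}

/-- Disjointness of the resonance sets: if `|k − k'| > 2` and `μ_k, μ_{k'} > 2/δ`,
then `σ_k^δ ∩ σ_{k'}^δ = ∅`. -/
theorem resSet_disjoint {δ : ℝ} (hδ0 : 0 < δ) (hδ1 : δ < 1) {k k' : ℕ}
    (hkk' : |(k : ℝ) - (k' : ℝ)| > 2) (hk : mu k > 2 / δ) (hk' : mu k' > 2 / δ) :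
    resSet δ k ∩ resSet δ k' = ∅ := by
  have hmu_lt : ∀ a : ℕ, mu a < a + 1 := by
    intro a
    rw [mu, Real.sqrt_lt' (by positivity : (0:ℝ) < (a:ℝ) + 1)]
    have : (0 : ℝ) ≤ a := Nat.cast_nonneg a
    nlinarith
  have hmu_ge : ∀ a : ℕ, (a : ℝ) ≤ mu a := by
    intro a
    rw [mu]
    have h : ((a : ℝ)) = Real.sqrt ((a : ℝ) ^ 2) := (Real.sqrt_sq (Nat.cast_nonneg a)).symm
    rw [h]
    apply Real.sqrt_le_sqrt
    have : (0 : ℝ) ≤ a := Nat.cast_nonneg a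
    nlinarith
  have gap : ∀ a b : ℕ, a + 3 ≤ b → mu b - mu a > 2 := by
    intro a b hab
    have h1 := hmu_lt a
    have h2 := hmu_ge b
    have : (a : ℝ) + 3 ≤ b := by exact_mod_cast hab
    linarith
  have hgap : |mu k - mu k'| > 2 := by
    rcases le_or_gt k k' with h | h
    · have : k + 3 ≤ k' := by
        have : (k : ℝ) + 2 < k' := by
          rcases abs_cases ((k : ℝ) - k') with ⟨he, _⟩ | ⟨he, _⟩
          · have hle : (k : ℝ) ≤ k' := by exact_mod_cast h
            linarith
          · linarith
        have : (k + 2 : ℕ) < k' := by exact_mod_cast this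
        omega
      have := gap k k' this
      rw [abs_sub_comm, abs_of_pos (by linarith)]
      linarith
    · have : k' + 3 ≤ k := by
        have h2' : (k' : ℝ) + 2 < k := by
          rcases abs_cases ((k : ℝ) - k') with ⟨he, _⟩ | ⟨he, _⟩
          · linarith
          · have hle : (k' : ℝ) ≤ k := by exact_mod_cast h.le
            linarith
        have : (k' + 2 : ℕ) < k := by exact_mod_cast h2'
        omega
      have := gap k' k this
      rw [abs_of_pos (by linarith)]
      linarith
  have h12 : (1 : ℝ) / δ < 2 / δ := by
    rw [div_lt_div_iff_of_pos_right hδ0]; norm_num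
  ext t
  simp only [resSet, Set.mem_inter_iff, Set.mem_setOf_eq, Set.mem_empty_iff_false,
    iff_false]
  rintro ⟨h1 | h1, h2 | h2⟩
  · set S := Real.sqrt (max (mu t.1 ^ 2 - mu t.2.1 ^ 2 + mu t.2.2 ^ 2) 0) with hS
    have htri : |mu k - mu k'| ≤ |mu k - S| + |S - mu k'| := abs_sub_le _ _ _
    rw [abs_sub_comm S (mu k')] at htri
    linarith
  · linarith
  · linarith
  · linarith
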